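/- arXiv:1502.07336 — 6 statements merged into one kernel-verified Lean document; each statement's English description precedes it below -/
import Mathlib

section
/- Let G be a transitive group of permutations of a finite set Ω. Let σ be a permutation of Ω of order 2 which fixes exactly one element ω of Ω and which normalizes G, that is G^σ = G. Let G_ω be the stabilizer of ω in G. Then M^σ = M for every group M with G_ω ≤ M ≤ G. -/
/-- Parity lemma: if an involution `f` maps a finite set `S` into itself, then the number
of fixed points of `f` in `S` has the same parity as the cardinality of `S`. -/
private lemma involution_card_filter_mod_two {α : Type*} [DecidableEq α] (f : α → α) :
    ∀ S : Finset α, (∀ a ∈ S, f a ∈ S) → (∀ a ∈ S, f (f a) = a) →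
      (S.filter fun a => f a = a).card % 2 = S.card % 2 := by
  intro S
  induction S using Finset.strongInduction with
  | _ S ih =>
    intro hmaps hinv
    by_cases hall : ∀ a ∈ S, f a = a
    · rw [Finset.filter_true_of_mem hall]
    · push_neg at hall
      obtain ⟨b, hbS, hfb⟩ := hall
      have hfbS : f b ∈ S := hmaps b hbS
      set S' := (S.erase b).erase (f b) with hS'
      have hmemS' : ∀ a, a ∈ S' ↔ a ∈ S ∧ a ≠ b ∧ a ≠ f b := by
        intro a
        simp only [hS', Finset.mem_erase]
        tauto
      have hsub : S' ⊆ S := fun a ha => ((hmemS' a).mp ha).1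
      have hbS' : b ∉ S' := by
        intro h
        exact ((hmemS' b).mp h).2.1 rfl
      have hssub : S' ⊂ S := ⟨hsub, fun h => hbS' (h hbS)⟩
      have hmaps' : ∀ a ∈ S', f a ∈ S' := by
        intro a ha
        rw [hmemS'] at ha ⊢
        obtain ⟨haS, hab, hafb⟩ := ha
        refine ⟨hmaps a haS, ?_, ?_⟩
        · intro h
          exact hafb (by rw [← hinv a haS, h])
        · intro h
          apply hab
          have h2 : f (f a) = f (f b) := by rw [h]
          rw [hinv a haS, hinv b hbS] at h2
          exact h2
      have hinv' : ∀ a ∈ S', f (f a) = a := fun a ha => hinv a (hsub ha)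
      have hfilter : S.filter (fun a => f a = a) = S'.filter (fun a => f a = a) := by
        ext a
        simp only [Finset.mem_filter, hmemS']
        constructor
        · rintro ⟨haS, hfa⟩
          refine ⟨⟨haS, ?_, ?_⟩, hfa⟩
          · rintro rfl; exact hfb hfa
          · rintro rfl
            have hb2 : f (f b) = b := hinv b hbS
            rw [hfa] at hb2
            exact hfb hb2
        · rintro ⟨⟨haS, _, _⟩, hfa⟩
          exact ⟨haS, hfa⟩
      have hfbb : f b ≠ b := hfb
      have hcard2 : 2 ≤ S.card := by
        have hsub2 : ({b, f b} : Finset α) ⊆ S := by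
          intro a ha
          simp only [Finset.mem_insert, Finset.mem_singleton] at ha
          rcases ha with rfl | rfl <;> assumption
        have := Finset.card_le_card hsub2
        rwa [Finset.card_insert_of_notMem (by simp [Ne.symm hfbb]),
          Finset.card_singleton] at this
      have hcard : S.card = S'.card + 2 := by
        have h1 : f b ∈ S.erase b := Finset.mem_erase.mpr ⟨hfbb, hfbS⟩
        rw [hS', Finset.card_erase_of_mem h1, Finset.card_erase_of_mem hbS]
        omega
      rw [hfilter, hcard]
      have := ih S' hssub hmaps' hinv'
      omega

/-- **Proposition (P:Gs).** Let `G` be a transitive group of permutations of the finite set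
`Ω`. Let `σ` be a permutation of `Ω` of order 2 which fixes exactly one element `ω`, and
which normalizes `G`, that is `G^σ = G`. Then `M^σ = M` for each group `M` with
`G_ω ≤ M ≤ G`, where `G_ω` is the stabilizer of `ω` in `G` and `M^σ = σ⁻¹ M σ`. -/
theorem conj_stable_of_between_stabilizer {Ω : Type*} [Finite Ω]
    (G : Subgroup (Equiv.Perm Ω))
    (htrans : ∀ x y : Ω, ∃ g ∈ G, g x = y)
    (σ : Equiv.Perm Ω) (hσ : orderOf σ = 2) (ω : Ω)
    (hfix : ∀ x : Ω, σ x = x ↔ x = ω)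
    (hnorm : G.map (MulAut.conj σ⁻¹).toMonoidHom = G)
    (M : Subgroup (Equiv.Perm Ω))
    (hGω : G ⊓ MulAction.stabilizer (Equiv.Perm Ω) ω ≤ M) (hMG : M ≤ G) :
    M.map (MulAut.conj σ⁻¹).toMonoidHom = M := by
  classical
  haveI := Fintype.ofFinite Ω
  -- basic facts about σ
  have hσ2 : σ * σ = 1 := by
    have h := pow_orderOf_eq_one σ
    rwa [hσ, pow_two] at h
  have hσinv : σ⁻¹ = σ := inv_eq_of_mul_eq_one_right hσ2
  have hσω : σ ω = ω := (hfix ω).mpr rfl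
  have hσσ : ∀ y : Equiv.Perm Ω, σ * (σ * y) = y := fun y => by
    rw [← mul_assoc, hσ2, one_mul]
  have hσpt : ∀ y : Ω, σ (σ y) = y := fun y => by
    rw [← Equiv.Perm.mul_apply, hσ2, Equiv.Perm.one_apply]
  -- G is closed under conjugation by σ
  have hGc : ∀ g ∈ G, σ * g * σ ∈ G := by
    intro g hg
    have h1 : (MulAut.conj σ⁻¹).toMonoidHom g ∈ G.map (MulAut.conj σ⁻¹).toMonoidHom :=
      Subgroup.mem_map_of_mem _ hg
    rw [hnorm] at h1
    simpa [MulAut.conj_apply, hσinv] using h1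
  -- core statement: M is closed under conjugation by σ
  have core : ∀ m ∈ M, σ * m * σ ∈ M := by
    intro m hm
    have hmG : m ∈ G := hMG hm
    set x := m ω with hxdef
    set c := σ * m * σ * m⁻¹ with hc
    have hcG : c ∈ G := by
      rw [hc]
      exact mul_mem (hGc m hmG) (inv_mem hmG)
    have hcx : c x = σ x := by
      rw [hc, hxdef]
      simp only [Equiv.Perm.mul_apply, Equiv.Perm.coe_inv, Equiv.symm_apply_apply, hσω]
    set s := m * σ * m⁻¹ with hs
    have hsc : σ * c = s := by
      rw [hc, hs]
      simp only [mul_assoc, hσσ]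
    -- conjugation of powers of c by σ
    have h1 : σ * c * σ = c⁻¹ := by
      rw [hc]
      simp only [mul_inv_rev, inv_inv, hσinv, mul_assoc, hσσ, hσ2, mul_one]
    have hkey : ∀ j : ℤ, σ * c ^ j * σ = (c ^ j)⁻¹ := by
      intro j
      have h2 := map_zpow (MulAut.conj σ) c j
      simp only [MulAut.conj_apply, hσinv] at h2
      rw [h2, h1, inv_zpow]
    have happ : ∀ (j : ℤ) (y : Ω), σ ((c ^ j) y) = (c ^ j)⁻¹ (σ y) := by
      intro j y
      have h2 : σ * c ^ j = (c ^ j)⁻¹ * σ := by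
        have h3 : σ * c ^ j * σ * σ = (c ^ j)⁻¹ * σ := by rw [hkey j]
        rwa [mul_assoc (σ * c ^ j), hσ2, mul_one] at h3
      rw [← Equiv.Perm.mul_apply, h2, Equiv.Perm.mul_apply]
    -- the ⟨c⟩-orbit of x
    set A : Finset Ω := Finset.univ.filter (fun y => ∃ j : ℤ, (c ^ j) x = y) with hA
    have hmemA : ∀ y, y ∈ A ↔ ∃ j : ℤ, (c ^ j) x = y := by
      intro y
      simp [hA]
    have hxA : x ∈ A := (hmemA x).mpr ⟨0, by simp⟩
    have hcA : ∀ y ∈ A, c y ∈ A := by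
      intro y hy
      obtain ⟨j, rfl⟩ := (hmemA y).mp hy
      refine (hmemA _).mpr ⟨1 + j, ?_⟩
      rw [zpow_add, zpow_one, Equiv.Perm.mul_apply]
    have hσA : ∀ y ∈ A, σ y ∈ A := by
      intro y hy
      obtain ⟨j, rfl⟩ := (hmemA y).mp hy
      refine (hmemA _).mpr ⟨-j + 1, ?_⟩
      rw [zpow_add, zpow_one, Equiv.Perm.mul_apply, hcx, happ j x, zpow_neg]
    have hsA : ∀ y ∈ A, s y ∈ A := by
      intro y hy
      rw [← hsc, Equiv.Perm.mul_apply]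
      exact hσA _ (hcA y hy)
    have hsinv : ∀ y : Ω, s (s y) = y := by
      intro y
      rw [hs]
      simp only [Equiv.Perm.mul_apply, Equiv.Perm.coe_inv, Equiv.symm_apply_apply, hσpt,
        Equiv.Perm.coe_inv, Equiv.apply_symm_apply]
    have hs_fix : ∀ y : Ω, s y = y ↔ y = x := by
      intro y
      rw [hs, hxdef]
      constructor
      · intro h
        have h2 : σ (m⁻¹ y) = m⁻¹ y := by
          have h3 := congrArg (fun z => m⁻¹ z) h
          simpa only [Equiv.Perm.mul_apply, Equiv.Perm.coe_inv, Equiv.symm_apply_apply] using h3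
        have h4 : m⁻¹ y = ω := (hfix _).mp h2
        rw [← h4, Equiv.Perm.coe_inv, Equiv.apply_symm_apply]
      · rintro rfl
        simp only [Equiv.Perm.mul_apply, Equiv.Perm.coe_inv, Equiv.symm_apply_apply, hσω]
    -- parity via s : |A| is odd
    have hpar_s := involution_card_filter_mod_two s A hsA (fun a _ => hsinv a)
    have hfs : A.filter (fun a => s a = a) = {x} := by
      ext a
      simp only [Finset.mem_filter, Finset.mem_singleton, hs_fix]
      exact ⟨fun h => h.2, fun h => ⟨h ▸ hxA, h⟩⟩
    rw [hfs, Finset.card_singleton] at hpar_s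
    -- parity via σ : ω must lie in A
    have hωA : ω ∈ A := by
      by_contra hωA
      have hpar_σ := involution_card_filter_mod_two σ A hσA (fun a _ => hσpt a)
      have hfσ : A.filter (fun a => σ a = a) = ∅ := by
        ext a
        simp only [Finset.mem_filter, Finset.notMem_empty, iff_false, not_and]
        intro haA h
        exact hωA ((hfix a).mp h ▸ haA)
      rw [hfσ, Finset.card_empty] at hpar_σ
      omega
    obtain ⟨j₀, hj₀⟩ := (hmemA ω).mp hωA
    -- c ^ j₀ ∈ M
    have hdM : c ^ j₀ ∈ M := by
      have h1 : c ^ j₀ * m ∈ G ⊓ MulAction.stabilizer (Equiv.Perm Ω) ω := by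
        refine Subgroup.mem_inf.mpr ⟨mul_mem (zpow_mem hcG j₀) hmG, ?_⟩
        refine MulAction.mem_stabilizer_iff.mpr ?_
        rw [Equiv.Perm.smul_def, Equiv.Perm.mul_apply, ← hxdef]
        exact hj₀
      have h2 := hGω h1
      have h3 : (c ^ j₀ * m) * m⁻¹ ∈ M := mul_mem h2 (inv_mem hm)
      rwa [mul_assoc, mul_inv_cancel, mul_one] at h3
    -- (σ m σ) ω = (c ^ j₀) ω
    have hfinal : (σ * m * σ) ω = (c ^ j₀) ω := by
      have hx' : x = (c ^ j₀)⁻¹ ω := by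
        rw [← hj₀, Equiv.Perm.coe_inv, Equiv.symm_apply_apply]
      have h2 : σ x = (c ^ j₀) ω := by
        rw [hx', ← zpow_neg, happ (-j₀) ω, zpow_neg, inv_inv, hσω]
      rw [← h2]
      simp only [Equiv.Perm.mul_apply, hσω, ← hxdef]
    -- conclude σ m σ ∈ M
    have h1 : (c ^ j₀)⁻¹ * (σ * m * σ) ∈ G ⊓ MulAction.stabilizer (Equiv.Perm Ω) ω := by
      refine Subgroup.mem_inf.mpr ⟨mul_mem (inv_mem (zpow_mem hcG j₀)) (hGc m hmG), ?_⟩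
      refine MulAction.mem_stabilizer_iff.mpr ?_
      rw [Equiv.Perm.smul_def, Equiv.Perm.mul_apply, hfinal, Equiv.Perm.coe_inv, Equiv.symm_apply_apply]
    have h2 := hGω h1
    have h3 : (c ^ j₀) * ((c ^ j₀)⁻¹ * (σ * m * σ)) ∈ M := mul_mem hdM h2
    rwa [← mul_assoc, mul_inv_cancel, one_mul] at h3
  -- assemble the subgroup equality
  ext g
  simp only [Subgroup.mem_map, MulEquiv.coe_toMonoidHom, MulAut.conj_apply, hσinv, inv_inv]
  constructor
  · rintro ⟨n, hn, rfl⟩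
    exact core n hn
  · intro hg
    refine ⟨σ * g * σ, core g hg, ?_⟩
    calc σ * (σ * g * σ) * σ = (σ * σ) * g * (σ * σ) := by group
    _ = g := by rw [hσ2, one_mul, mul_one]
end

section
/- Let E be the elliptic curve Y² = X³ + aX + b with a, b ∈ ℝ, and suppose that the polynomial X³ + aX + b has three distinct real roots. Then there exists an element w ∈ E(ℝ) such that there is no ŵ ∈ E(ℝ) with w = 2ŵ, i.e. w is not twice a real point of E. -/
noncomputable section

/-- The elliptic curve `Y² = X³ + aX + b` over `ℝ`. -/
def Wℝ (a b : ℝ) : WeierstrassCurve.Affine ℝ :=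
  { a₁ := 0, a₂ := 0, a₃ := 0, a₄ := a, a₆ := b }

open WeierstrassCurve.Affine

lemma aux_gt (a b r e : ℝ) (hre : r ≠ e) (he0 : e ^ 3 + a * e + b = 0)
    (h : (Wℝ a b).Nonsingular r 0) (w2 : (Wℝ a b).Point)
    (heq : Point.some _ _ h = 2 • w2) : e < r := by
  rw [two_smul] at heq
  cases w2 with
  | zero =>
      exact (Point.some_ne_zero h (heq.trans rfl)).elim
  | @some x y h2 =>
      by_cases hy : y = (Wℝ a b).negY x y
      · rw [Point.add_self_of_Y_eq hy] at heq
        exact absurd heq (Point.some_ne_zero h)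
      · rw [Point.add_self_of_Y_ne hy] at heq
        have hy0 : y ≠ 0 := by
          intro h0
          exact hy (by simp [Wℝ, negY, h0])
        injection heq with hx hyy
        have hℓ : (Wℝ a b).slope x x y y = (3 * x ^ 2 + a) / (2 * y) := by
          rw [slope_of_Y_ne rfl hy]
          simp [Wℝ, negY]
          ring_nf
        have hxv : r = ((3 * x ^ 2 + a) / (2 * y)) ^ 2 - 2 * x := by
          rw [hx, hℓ]
          simp [Wℝ, addX]
          ring
        have hyq : y ^ 2 = x ^ 3 + a * x + b := by
          have := ((Wℝ a b).equation_iff x y).mp h2.1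
          simpa [Wℝ] using this
        have h2y : (2 : ℝ) * y ≠ 0 := mul_ne_zero two_ne_zero hy0
        have hkey : r - e = ((x ^ 2 - 2 * e * x - a - 2 * e ^ 2) / (2 * y)) ^ 2 := by
          rw [hxv, div_pow, div_pow]
          field_simp
          linear_combination (-4*(2*x+e)) * hyq + (-4*(2*x+e)) * he0
        have h0 : 0 ≤ r - e := hkey ▸ sq_nonneg _
        have hne : r - e ≠ 0 := sub_ne_zero.mpr hre
        have : 0 < r - e := h0.lt_of_ne (Ne.symm hne)
        linarith

/-- **Lemma (L:w).** Let `E : Y² = X³ + aX + b` with `a, b ∈ ℝ`, and suppose that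
`X³ + aX + b` has three distinct real roots. Then there is `w ∈ E(ℝ)` such that there is
no `w2 ∈ E(ℝ)` with `w = 2w2`. -/
theorem exists_point_not_twice (a b : ℝ) (hΔ : 4 * a ^ 3 + 27 * b ^ 2 ≠ 0)
    (r₁ r₂ r₃ : ℝ) (h12 : r₁ ≠ r₂) (h13 : r₁ ≠ r₃) (h23 : r₂ ≠ r₃)
    (hroots : ∀ x : ℝ, x ^ 3 + a * x + b = (x - r₁) * (x - r₂) * (x - r₃)) :
    ∃ w : (Wℝ a b).Point, ∀ w2 : (Wℝ a b).Point, w ≠ 2 • w2 := by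
  by_contra hcon
  push_neg at hcon
  have hs : r₁ + r₂ + r₃ = 0 := by
    linear_combination (hroots 1 + hroots (-1)) / 2 - hroots 0
  have hq : r₁ * r₂ + r₁ * r₃ + r₂ * r₃ = a := by
    linear_combination (hroots (-1) - hroots 1) / 2
  have hr1 : r₁ ^ 3 + a * r₁ + b = 0 := by linear_combination hroots r₁
  have hr2 : r₂ ^ 3 + a * r₂ + b = 0 := by linear_combination hroots r₂
  have hd1 : 3 * r₁ ^ 2 + a = (r₁ - r₂) * (r₁ - r₃) := by
    linear_combination 2 * r₁ * hs - hq
  have hd2 : 3 * r₂ ^ 2 + a = (r₂ - r₁) * (r₂ - r₃) := by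
    linear_combination 2 * r₂ * hs - hq
  have hns1 : (Wℝ a b).Nonsingular r₁ 0 := by
    rw [nonsingular_iff]
    constructor
    · rw [equation_iff]
      simp only [Wℝ]
      linear_combination -hr1
    · left
      simp only [Wℝ]
      intro hc
      exact mul_ne_zero (sub_ne_zero.mpr h12) (sub_ne_zero.mpr h13)
        (by linear_combination -hc - hd1)
  have hns2 : (Wℝ a b).Nonsingular r₂ 0 := by
    rw [nonsingular_iff]
    constructor
    · rw [equation_iff]
      simp only [Wℝ]
      linear_combination -hr2
    · left
      simp only [Wℝ]
      intro hc
      exact mul_ne_zero (sub_ne_zero.mpr h12.symm) (sub_ne_zero.mpr h23)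
        (by linear_combination -hc - hd2)
  obtain ⟨w21, hw21⟩ := hcon (Point.some _ _ hns1)
  obtain ⟨w22, hw22⟩ := hcon (Point.some _ _ hns2)
  have g1 : r₂ < r₁ := aux_gt a b r₁ r₂ h12 hr2 hns1 w21 hw21
  have g2 : r₁ < r₂ := aux_gt a b r₂ r₁ h12.symm hr1 hns2 w22 hw22
  linarith

end
end

section
/- Suppose that f ∘ g ∈ ℝ(z), where f ∈ ℂ(z) is a nonconstant rational function and g ∈ ℂ[z] is a nonconstant polynomial. Then λ ∘ g ∈ ℝ[z] for some linear polynomial λ(z) = az + b ∈ ℂ[z] with a ≠ 0. -/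
open scoped Polynomial

noncomputable section

/-- A rational function over `ℂ` has real coefficients (i.e. lies in `ℝ(z)`). -/
def RatFunc.IsReal (f : RatFunc ℂ) : Prop :=
  (∀ n, (f.num.coeff n).im = 0) ∧ (∀ n, (f.denom.coeff n).im = 0)

/-- Composition `f ∘ g` of rational functions (substitution of `g` into `f`). -/
def RatFunc.comp' (f g : RatFunc ℂ) : RatFunc ℂ :=
  RatFunc.eval (algebraMap ℂ (RatFunc ℂ)) g f

namespace PolyInnerAux

open Polynomial

/-- A polynomial all whose coefficients have zero imaginary part is fixed by
coefficientwise conjugation. -/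
lemma map_conj_eq_self {p : ℂ[X]} (h : ∀ n, (p.coeff n).im = 0) :
    p.map (starRingEnd ℂ) = p := by
  ext n
  rw [coeff_map]
  exact Complex.conj_eq_iff_im.mpr (h n)

lemma comp_ne_zero {p g : ℂ[X]} (hp : p ≠ 0) (hg : 0 < g.natDegree) :
    p.comp g ≠ 0 := by
  rw [Ne, comp_eq_zero_iff]
  push_neg
  refine ⟨hp, fun _ => fun hgC => ?_⟩
  have := natDegree_C (g.coeff 0)
  rw [← hgC] at this
  omega

/-- Key lemma: if `p ∘ g` and `(σ p) ∘ (σ g)` generate the same rational function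
(in the precise cross-multiplied sense below), with `p` nonconstant coprime to `q`,
`g` monic with zero constant term, then `g` is fixed by conjugation. -/
lemma key (p q g : ℂ[X]) (hpd : 0 < p.natDegree) (hq0 : q ≠ 0)
    (hcop : IsCoprime p q) (hgm : g.Monic) (hgd : 0 < g.natDegree)
    (hg0 : g.coeff 0 = 0)
    (hid : (p.comp g) * ((q.comp g).map (starRingEnd ℂ))
         = ((p.comp g).map (starRingEnd ℂ)) * (q.comp g)) :
    g.map (starRingEnd ℂ) = g := by
  set c := (starRingEnd ℂ)
  set G := g.map c with hGdef
  have hp0 : p ≠ 0 := fun h => by simp [h] at hpd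
  have hGm : G.Monic := hgm.map c
  have hGdeg : G.natDegree = g.natDegree := hgm.natDegree_map c
  have hA0 : p.comp g ≠ 0 := comp_ne_zero hp0 hgd
  have hB0 : q.comp g ≠ 0 := comp_ne_zero hq0 hgd
  -- coprimality of the composites
  have hcopAB : IsCoprime (p.comp g) (q.comp g) := by
    have := hcop.map (aeval g).toRingHom
    simpa [comp_eq_aeval] using this
  -- divisibility and degree count give `(σ p)∘(σ g) = λ · (p ∘ g)`
  have hdvd : p.comp g ∣ (p.comp g).map c := by
    exact hcopAB.dvd_of_dvd_mul_right ⟨(q.comp g).map c, hid.symm⟩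
  obtain ⟨k, hk⟩ := hdvd
  have hmapdeg : ((p.comp g).map c).natDegree = (p.comp g).natDegree :=
    natDegree_map c
  have hPG0 : (p.comp g).map c ≠ 0 := by
    intro h
    apply hA0
    have := congrArg (Polynomial.map (starRingEnd ℂ)) h
    simpa [Polynomial.map_map, Complex.conj_conj] using this
  have hk0 : k ≠ 0 := by rintro rfl; simp at hk; exact hA0 hk
  have hkdeg : k.natDegree = 0 := by
    have := hmapdeg
    rw [hk, natDegree_mul hA0 hk0] at this
    omega
  obtain ⟨lam, hlam⟩ : ∃ lam, k = C lam := ⟨k.coeff 0, eq_C_of_natDegree_eq_zero hkdeg⟩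
  have hlam0 : lam ≠ 0 := by rintro rfl; simp [hlam] at hk0
  -- leading coefficients
  set n := p.natDegree with hn
  set m := g.natDegree with hm
  set a := p.leadingCoeff with ha
  have ha0 : a ≠ 0 := leadingCoeff_ne_zero.mpr hp0
  have hlc : c a = a * lam := by
    have h1 : ((p.comp g).map c).leadingCoeff = c a := by
      rw [leadingCoeff_map, leadingCoeff_comp (by omega), hgm.leadingCoeff]
      simp [ha]
    have h2 : ((p.comp g) * C lam).leadingCoeff = a * lam := by
      rw [leadingCoeff_mul, leadingCoeff_comp (by omega), hgm.leadingCoeff, leadingCoeff_C]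
      simp [ha]
    rw [hk, hlam] at h1
    rw [← h1, h2]
  -- erase the lead
  set r := p.eraseLead with hr
  have hrp : r + C a * X ^ n = p := p.eraseLead_add_C_mul_X_pow
  have hrd : r.natDegree ≤ n - 1 := p.eraseLead_natDegree_le
  -- main identity with the lead separated
  have hmain : C (c a) * (G ^ n - g ^ n)
      = (r.comp g) * C lam - ((r.comp g).map c) := by
    have hk' : (p.comp g).map c = (p.comp g) * C lam := by rw [hk, hlam]
    have hexp : (p.comp g) = r.comp g + C a * g ^ n := by
      conv_lhs => rw [← hrp]
      simp [add_comp, mul_comp, pow_comp]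
    have hexp2 : (p.comp g).map c = (r.comp g).map c + C (c a) * G ^ n := by
      rw [hexp]
      simp [Polynomial.map_add, Polynomial.map_mul, Polynomial.map_pow, map_C, hGdef]
    have hCC : C (c a) = C a * C lam := by rw [hlc, C_mul]
    rw [hexp2, hexp] at hk'
    linear_combination hk' - g ^ n * hCC
  -- degree bound on the right-hand side
  have hrcompdeg : (r.comp g).natDegree ≤ (n - 1) * m := by
    rw [natDegree_comp]
    exact Nat.mul_le_mul_right m hrd
  have hEdeg : ((r.comp g) * C lam - ((r.comp g).map c)).natDegree ≤ (n - 1) * m := by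
    refine le_trans (natDegree_sub_le _ _) ?_
    refine max_le ?_ ?_
    · exact le_trans (natDegree_mul_le) (by simpa using hrcompdeg)
    · exact le_trans natDegree_map_le hrcompdeg
  -- suppose G ≠ g and derive a contradiction
  by_contra hne
  have hd0 : G - g ≠ 0 := sub_ne_zero.mpr hne
  have hdc0 : (G - g).coeff 0 = 0 := by
    simp [hGdef, coeff_map, hg0]
  have hddeg : 1 ≤ (G - g).natDegree := by
    by_contra h
    push_neg at h
    interval_cases hdn : (G - g).natDegree
    · exact hd0 (by rw [eq_C_of_natDegree_eq_zero hdn, hdc0, map_zero])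
  set S : ℂ[X] := ∑ i ∈ Finset.range n, G ^ i * g ^ (n - 1 - i) with hS
  have hfac : S * (G - g) = G ^ n - g ^ n := geom_sum₂_mul G g n
  have hterm : ∀ i ∈ Finset.range n, (G ^ i * g ^ (n - 1 - i)).natDegree = (n - 1) * m
      ∧ (G ^ i * g ^ (n - 1 - i)).Monic := by
    intro i hi
    rw [Finset.mem_range] at hi
    have hmon : (G ^ i * g ^ (n - 1 - i)).Monic := (hGm.pow i).mul (hgm.pow _)
    refine ⟨?_, hmon⟩
    rw [natDegree_mul (hGm.pow i).ne_zero (hgm.pow _).ne_zero,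
      natDegree_pow, natDegree_pow, hGdeg]
    have hsum : i + (n - 1 - i) = n - 1 := by omega
    calc i * m + (n - 1 - i) * g.natDegree = (i + (n - 1 - i)) * m := by rw [← hm]; ring
      _ = (n - 1) * m := by rw [hsum]
  have hScoeff : S.coeff ((n - 1) * m) = (n : ℂ) := by
    rw [hS, finset_sum_coeff]
    have : ∀ i ∈ Finset.range n, (G ^ i * g ^ (n - 1 - i)).coeff ((n - 1) * m) = 1 := by
      intro i hi
      obtain ⟨hdeg, hmon⟩ := hterm i hi
      rw [← hdeg]
      exact hmon.coeff_natDegree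
    rw [Finset.sum_congr rfl this]
    simp
  have hSc0 : S.coeff ((n - 1) * m) ≠ 0 := by
    rw [hScoeff]
    exact Nat.cast_ne_zero.mpr (by omega)
  have hS0 : S ≠ 0 := fun h0 => hSc0 (by simp [h0])
  have hSdeg : (n - 1) * m ≤ S.natDegree := le_natDegree_of_ne_zero hSc0
  -- contradiction on degrees
  have hLHSdeg : (C (c a) * (G ^ n - g ^ n)).natDegree = S.natDegree + (G - g).natDegree := by
    rw [natDegree_C_mul (by simpa using ha0), ← hfac, natDegree_mul hS0 hd0]
  rw [hmain] at hLHSdeg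
  have : S.natDegree + (G - g).natDegree ≤ (n - 1) * m := hLHSdeg ▸ hEdeg
  omega

end PolyInnerAux

/-- **Lemma.** Suppose `f ∘ g ∈ ℝ(z)` where `f ∈ ℂ(z)` is a nonconstant rational function
and `g ∈ ℂ[z]` is a nonconstant polynomial. Then `λ ∘ g ∈ ℝ[z]` for some linear polynomial
`λ(z) = az + b ∈ ℂ[z]`, `a ≠ 0`. -/
theorem poly_inner_factor_real (f : RatFunc ℂ) (hf : ∀ c : ℂ, f ≠ RatFunc.C c)
    (g : ℂ[X]) (hg : 0 < g.natDegree)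
    (hreal : (RatFunc.comp' f (algebraMap ℂ[X] (RatFunc ℂ) g)).IsReal) :
    ∃ a b : ℂ, a ≠ 0 ∧ ∀ n, ((Polynomial.C a * g + Polynomial.C b).coeff n).im = 0 := by
  classical
  open Polynomial PolyInnerAux in
  set σ := (starRingEnd ℂ)
  set p := f.num with hp
  set q := f.denom with hq
  have hq0 : q ≠ 0 := f.denom_ne_zero
  have hp0 : p ≠ 0 := by
    intro h
    have h0 : f = 0 := RatFunc.num_eq_zero_iff.mp h
    exact hf 0 (by rw [h0, map_zero])
  have hcop : IsCoprime p q := f.isCoprime_num_denom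
  -- evaluation of a polynomial at `algebraMap g` is `algebraMap (comp g)`
  have heval : ∀ P : ℂ[X],
      Polynomial.eval₂ (algebraMap ℂ (RatFunc ℂ)) (algebraMap ℂ[X] (RatFunc ℂ) g) P
        = algebraMap ℂ[X] (RatFunc ℂ) (P.comp g) := by
    intro P
    have hcomp : (algebraMap ℂ[X] (RatFunc ℂ)).comp (Polynomial.C : ℂ →+* ℂ[X])
        = algebraMap ℂ (RatFunc ℂ) := by
      ext1 z
      exact RatFunc.algebraMap_C z
    rw [Polynomial.comp, ← hcomp]
    exact (Polynomial.hom_eval₂ P Polynomial.C (algebraMap ℂ[X] (RatFunc ℂ)) g).symm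
  have hcompeq : RatFunc.comp' f (algebraMap ℂ[X] (RatFunc ℂ) g)
      = algebraMap ℂ[X] (RatFunc ℂ) (p.comp g) / algebraMap ℂ[X] (RatFunc ℂ) (q.comp g) := by
    unfold RatFunc.comp' RatFunc.eval
    rw [heval, heval]
  set h := RatFunc.comp' f (algebraMap ℂ[X] (RatFunc ℂ) g) with hh
  set N := h.num with hN
  set D := h.denom with hD
  have hD0 : D ≠ 0 := h.denom_ne_zero
  have hBpoly0 : q.comp g ≠ 0 := comp_ne_zero hq0 hg
  have hcross : (p.comp g) * D = N * (q.comp g) := by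
    apply RatFunc.algebraMap_injective ℂ
    have h1 : algebraMap ℂ[X] (RatFunc ℂ) (p.comp g) / algebraMap ℂ[X] (RatFunc ℂ) (q.comp g)
        = algebraMap ℂ[X] (RatFunc ℂ) N / algebraMap ℂ[X] (RatFunc ℂ) D := by
      rw [← hcompeq, hN, hD, RatFunc.num_div_denom]
    rw [div_eq_div_iff (RatFunc.algebraMap_ne_zero hBpoly0)
      (RatFunc.algebraMap_ne_zero hD0)] at h1
    simpa [map_mul] using h1
  -- conjugate the cross identity, using reality of N and D
  have hNfix : N.map σ = N := map_conj_eq_self hreal.1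
  have hDfix : D.map σ = D := map_conj_eq_self hreal.2
  have hcross2 : ((p.comp g).map σ) * D = N * ((q.comp g).map σ) := by
    have := congrArg (Polynomial.map σ) hcross
    simpa [Polynomial.map_mul, hNfix, hDfix] using this
  have hstar : (p.comp g) * ((q.comp g).map σ) = ((p.comp g).map σ) * (q.comp g) := by
    apply mul_right_cancel₀ hD0
    linear_combination ((q.comp g).map σ) * hcross - (q.comp g) * hcross2
  -- normalization of g to a monic polynomial with zero constant term
  set γ := g.leadingCoeff with hγ
  have hγ0 : γ ≠ 0 := leadingCoeff_ne_zero.mpr (fun h0 => by simp [h0] at hg)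
  set c₀ := g.coeff 0 with hc₀
  set g₀ : ℂ[X] := Polynomial.C γ⁻¹ * g - Polynomial.C (γ⁻¹ * c₀) with hg₀
  set ℓ : ℂ[X] := Polynomial.C γ * Polynomial.X + Polynomial.C c₀ with hℓ
  have hℓdeg : ℓ.natDegree = 1 := natDegree_linear hγ0
  have hℓg : ℓ.comp g₀ = g := by
    rw [hℓ, hg₀]
    have hCC : Polynomial.C γ * Polynomial.C γ⁻¹ = 1 := by
      rw [← Polynomial.C_mul, mul_inv_cancel₀ hγ0, Polynomial.C_1]
    rw [Polynomial.C_mul (a := γ⁻¹) (b := c₀)]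
    simp only [add_comp, mul_comp, C_comp, X_comp]
    linear_combination (g - Polynomial.C c₀) * hCC
  have hg₀deg : g₀.natDegree = g.natDegree := by
    rw [hg₀, natDegree_sub_C, natDegree_C_mul (inv_ne_zero hγ0)]
  have hg₀m : g₀.Monic := by
    unfold Polynomial.Monic Polynomial.leadingCoeff
    rw [hg₀deg, hg₀]
    rw [Polynomial.coeff_sub, Polynomial.coeff_C_mul, Polynomial.coeff_C,
      if_neg (by omega), Polynomial.coeff_natDegree, ← hγ]
    simp [inv_mul_cancel₀ hγ0]
  have hg₀0 : g₀.coeff 0 = 0 := by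
    rw [hg₀]
    simp [hc₀]
  -- the composed numerator/denominator through the normalization
  set p' : ℂ[X] := p.comp ℓ with hp'
  set q' : ℂ[X] := q.comp ℓ with hq'
  have hA' : p'.comp g₀ = p.comp g := by rw [hp', Polynomial.comp_assoc, hℓg]
  have hB' : q'.comp g₀ = q.comp g := by rw [hq', Polynomial.comp_assoc, hℓg]
  have hcop' : IsCoprime p' q' := by
    have := hcop.map (Polynomial.aeval ℓ).toRingHom
    simpa [hp', hq', Polynomial.comp_eq_aeval] using this
  have hℓC : ℓ ≠ Polynomial.C (ℓ.coeff 0) := by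
    intro hcon
    have := natDegree_C (ℓ.coeff 0)
    rw [← hcon, hℓdeg] at this
    omega
  have hp'0 : p' ≠ 0 := by
    rw [hp']
    exact PolyInnerAux.comp_ne_zero hp0 (by omega)
  have hq'0 : q' ≠ 0 := by
    rw [hq']
    exact PolyInnerAux.comp_ne_zero hq0 (by omega)
  have hg₀d : 0 < g₀.natDegree := by omega
  -- identity for the normalized data
  have hstar' : (p'.comp g₀) * ((q'.comp g₀).map σ)
      = ((p'.comp g₀).map σ) * (q'.comp g₀) := by
    rw [hA', hB']; exact hstar
  -- at least one of p, q is nonconstant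
  have hnonconst : 0 < p.natDegree ∨ 0 < q.natDegree := by
    by_contra hcon
    push_neg at hcon
    obtain ⟨h1, h2⟩ := hcon
    have hqm : q.Monic := f.monic_denom
    have hq1 : q = 1 := hqm.natDegree_eq_zero.mp (by omega)
    obtain ⟨cc, hcc⟩ : ∃ cc, p = Polynomial.C cc :=
      ⟨p.coeff 0, Polynomial.eq_C_of_natDegree_eq_zero (by omega)⟩
    apply hf cc
    rw [← f.num_div_denom, ← hp, ← hq, hq1, hcc]
    simp [RatFunc.algebraMap_C]
  -- conclude that g₀ is conjugation-fixed
  have hg₀fix : g₀.map σ = g₀ := by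
    rcases hnonconst with hcase | hcase
    · refine key p' q' g₀ ?_ hq'0 hcop' hg₀m hg₀d hg₀0 ?_
      · rw [hp', natDegree_comp, hℓdeg]; omega
      · exact hstar'
    · refine key q' p' g₀ ?_ hp'0 hcop'.symm hg₀m hg₀d hg₀0 ?_
      · rw [hq', natDegree_comp, hℓdeg]; omega
      · rw [hA', hB']
        linear_combination -hstar
  -- produce the affine map
  refine ⟨γ⁻¹, -(γ⁻¹ * c₀), inv_ne_zero hγ0, fun n => ?_⟩
  have : Polynomial.C γ⁻¹ * g + Polynomial.C (-(γ⁻¹ * c₀)) = g₀ := by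
    rw [hg₀, map_neg, sub_eq_add_neg]
  rw [this]
  have := congrArg (fun P => Polynomial.coeff P n) hg₀fix
  simp only [Polynomial.coeff_map] at this
  have himz : σ (g₀.coeff n) = g₀.coeff n := this
  exact Complex.conj_eq_iff_im.mp himz

end
end

section
/- Let 1 ≤ k < n be integers and ζ ∈ ℂ with |ζ| = 1. Set F(z) = z^k(1 − z)^{n−k} and G(z) = (1 − ζz^k)/(1 − ζz^n). Then F(Ḡ(1/z)) = ζ^{−(n−k)} · F(G(z)) as rational functions, where Ḡ denotes the rational function whose coefficients are the complex conjugates of those of G. -/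
noncomputable section

lemma aux_ne (c : ℂ) (m : ℕ) (hm : 1 ≤ m) : (1 - RatFunc.C c * RatFunc.X ^ m : RatFunc ℂ) ≠ 0 := by
  have h : (1 - RatFunc.C c * RatFunc.X ^ m : RatFunc ℂ) =
      algebraMap (Polynomial ℂ) _ (1 - Polynomial.C c * Polynomial.X ^ m) := by
    rw [map_sub, map_one, map_mul, map_pow, RatFunc.algebraMap_C, RatFunc.algebraMap_X]
  rw [h]
  simp only [ne_eq, FaithfulSMul.algebraMap_eq_zero_iff]
  intro hz
  have := congrArg (fun p => Polynomial.coeff p 0) hz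
  simp [Polynomial.coeff_X_pow, (Nat.one_le_iff_ne_zero.mp hm).symm] at this

/-- **Equation (e:FG).** For `1 ≤ k < n`, `|ζ| = 1`, `F(z) = z^k (1-z)^{n-k}` and
`G(z) = (1 - ζ z^k)/(1 - ζ z^n)`, we have `F(Ḡ(1/z)) = ζ^{-(n-k)} F(G(z))` in `ℂ(z)`. -/
theorem FG_identity (n k : ℕ) (hk : 1 ≤ k) (hkn : k < n) (ζ : ℂ) (hζ : ‖ζ‖ = 1) :
    ((1 - RatFunc.C ((starRingEnd ℂ) ζ) * (RatFunc.X⁻¹) ^ k) /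
        (1 - RatFunc.C ((starRingEnd ℂ) ζ) * (RatFunc.X⁻¹) ^ n)) ^ k *
      (1 - (1 - RatFunc.C ((starRingEnd ℂ) ζ) * (RatFunc.X⁻¹) ^ k) /
        (1 - RatFunc.C ((starRingEnd ℂ) ζ) * (RatFunc.X⁻¹) ^ n)) ^ (n - k) =
    RatFunc.C ((ζ ^ (n - k))⁻¹) *
      (((1 - RatFunc.C ζ * RatFunc.X ^ k) / (1 - RatFunc.C ζ * RatFunc.X ^ n)) ^ k *
        (1 - (1 - RatFunc.C ζ * RatFunc.X ^ k) /
          (1 - RatFunc.C ζ * RatFunc.X ^ n)) ^ (n - k)) := by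
  have hζ0 : ζ ≠ 0 := by intro h; simp [h] at hζ
  have ht : (starRingEnd ℂ) ζ = ζ⁻¹ := by
    rw [Complex.inv_def, Complex.normSq_eq_norm_sq, hζ]; simp
  obtain ⟨m0, hm0⟩ := Nat.exists_eq_add_of_lt hkn
  have hm' : n = k + (m0 + 1) := by omega
  set m := m0 + 1 with hmdef
  subst hm'
  have hm1 : 1 ≤ m := by omega
  simp only [Nat.add_sub_cancel_left, ht, map_inv₀]
  have hX : (RatFunc.X : RatFunc ℂ) ≠ 0 := RatFunc.X_ne_zero
  have hCζ : (RatFunc.C ζ : RatFunc ℂ) ≠ 0 := by simpa using hζ0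
  have hDk : (1 - RatFunc.C ζ * RatFunc.X ^ k : RatFunc ℂ) ≠ 0 := aux_ne ζ k hk
  have hDn : (1 - RatFunc.C ζ * RatFunc.X ^ (k + m) : RatFunc ℂ) ≠ 0 := aux_ne ζ _ (by omega)
  have hDn' : (RatFunc.C ζ * RatFunc.X ^ (k + m) - 1 : RatFunc ℂ) ≠ 0 := by
    intro h; exact hDn (by rw [sub_eq_zero] at h ⊢; exact h.symm)
  have hDk' : (RatFunc.C ζ * RatFunc.X ^ k - 1 : RatFunc ℂ) ≠ 0 := by
    intro h; exact hDk (by rw [sub_eq_zero] at h ⊢; exact h.symm)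
  have e1 : ∀ j : ℕ, (1 - (RatFunc.C ζ)⁻¹ * (RatFunc.X⁻¹ : RatFunc ℂ) ^ j)
      = (RatFunc.C ζ * RatFunc.X ^ j - 1) / (RatFunc.C ζ * RatFunc.X ^ j) := by
    intro j
    field_simp
    rw [one_div, inv_pow, sub_mul, inv_mul_cancel₀ (pow_ne_zero _ hX)]
  -- G-hat = X^m * G
  have eG : (1 - (RatFunc.C ζ)⁻¹ * (RatFunc.X⁻¹ : RatFunc ℂ) ^ k) /
        (1 - (RatFunc.C ζ)⁻¹ * (RatFunc.X⁻¹ : RatFunc ℂ) ^ (k + m))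
      = RatFunc.X ^ m * ((1 - RatFunc.C ζ * RatFunc.X ^ k) /
        (1 - RatFunc.C ζ * RatFunc.X ^ (k + m))) := by
    rw [e1 k, e1 (k + m)]
    rw [div_div_div_eq]
    field_simp
    ring
  rw [eG]
  have e2 : 1 - RatFunc.X ^ m * ((1 - RatFunc.C ζ * RatFunc.X ^ k) /
        (1 - RatFunc.C ζ * RatFunc.X ^ (k + m)))
      = (1 - RatFunc.X ^ m) / (1 - RatFunc.C ζ * RatFunc.X ^ (k + m)) := by
    field_simp
    ring
  have e3 : 1 - (1 - RatFunc.C ζ * RatFunc.X ^ k) / (1 - RatFunc.C ζ * RatFunc.X ^ (k + m))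
      = RatFunc.C ζ * RatFunc.X ^ k *
        ((1 - RatFunc.X ^ m) / (1 - RatFunc.C ζ * RatFunc.X ^ (k + m))) := by
    field_simp
    ring
  rw [e2, e3]
  set g := (1 - RatFunc.C ζ * RatFunc.X ^ k) / (1 - RatFunc.C ζ * RatFunc.X ^ (k + m)) with hg
  set u := (1 - RatFunc.X ^ m) / (1 - RatFunc.C ζ * RatFunc.X ^ (k + m)) with hu
  rw [mul_pow, mul_pow, mul_pow, map_pow]
  field_simp
  ring

end
end

section
/- Let h ∈ ℂ[z] be a nonconstant polynomial and suppose h = f ∘ g for nonconstant rational functions f, g ∈ ℂ(z). Then there is a linear fractional function ρ ∈ ℂ(z) such that f ∘ ρ⁻¹ and ρ ∘ g are both polynomials. -/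
open scoped Polynomial

noncomputable section

open Polynomial

/-- Coprimality from absence of common roots over ℂ. -/
private lemma coprime_of_no_common_root {A B : ℂ[X]}
    (hroot : ∀ z : ℂ, A.eval z = 0 → B.eval z ≠ 0) : IsCoprime A B := by
  classical
  rw [← EuclideanDomain.gcd_isUnit_iff]
  by_contra hu
  have hdeg : (EuclideanDomain.gcd A B).degree ≠ 0 := fun hd =>
    hu (Polynomial.isUnit_iff_degree_eq_zero.mpr hd)
  obtain ⟨z, hz⟩ := IsAlgClosed.exists_root _ hdeg
  have hA : A.eval z = 0 :=
    Polynomial.eval_eq_zero_of_dvd_of_eval_eq_zero (EuclideanDomain.gcd_dvd_left A B) hz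
  have hB : B.eval z = 0 :=
    Polynomial.eval_eq_zero_of_dvd_of_eval_eq_zero (EuclideanDomain.gcd_dvd_right A B) hz
  exact hroot z hA hB

private lemma not_both_root {A B : ℂ[X]} (h : IsCoprime A B) (z : ℂ) (hA : A.eval z = 0) :
    B.eval z ≠ 0 := by
  intro hB
  obtain ⟨a, b, hab⟩ := h
  have := congrArg (Polynomial.eval z) hab
  simp [hA, hB] at this

/-- homogenized substitution identity. -/
private lemma hom_eval (S u v : ℂ[X]) (N : ℕ) (hS : S.natDegree < N + 1) (hv : v ≠ 0) :
    (algebraMap ℂ[X] (RatFunc ℂ) v) ^ N *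
        S.eval₂ (algebraMap ℂ (RatFunc ℂ))
          (algebraMap ℂ[X] (RatFunc ℂ) u / algebraMap ℂ[X] (RatFunc ℂ) v)
      = algebraMap ℂ[X] (RatFunc ℂ)
          (∑ i ∈ Finset.range (N + 1), Polynomial.C (S.coeff i) * u ^ i * v ^ (N - i)) := by
  have hv' : algebraMap ℂ[X] (RatFunc ℂ) v ≠ 0 := RatFunc.algebraMap_ne_zero hv
  rw [Polynomial.eval₂_eq_sum_range' _ hS, Finset.mul_sum, map_sum]
  refine Finset.sum_congr rfl fun i hi => ?_
  have hi' : i ≤ N := Nat.lt_succ_iff.mp (Finset.mem_range.mp hi)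
  rw [map_mul, map_mul, map_pow, map_pow, RatFunc.algebraMap_C, RatFunc.algebraMap_eq_C]
  rw [div_pow,
    show (algebraMap ℂ[X] (RatFunc ℂ) v) ^ N
        = (algebraMap ℂ[X] (RatFunc ℂ) v) ^ (N - i) * (algebraMap ℂ[X] (RatFunc ℂ) v) ^ i by
      rw [← pow_add, Nat.sub_add_cancel hi']]
  field_simp

/-- evaluation of the homogenization at a zero of `v`. -/
private lemma homog_eval_vzero (S u v : ℂ[X]) (d : ℕ) (z : ℂ) (hz : v.eval z = 0) :
    (∑ i ∈ Finset.range (d + 1), Polynomial.C (S.coeff i) * u ^ i * v ^ (d - i)).eval z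
      = S.coeff d * (u.eval z) ^ d := by
  rw [Polynomial.eval_finset_sum]
  rw [Finset.sum_eq_single d]
  · simp
  · intro i hi hne
    have hlt : i < d := by
      have := Finset.mem_range.mp hi; omega
    have : d - i ≠ 0 := by omega
    simp [hz, zero_pow this]
  · intro hd; exact absurd (Finset.self_mem_range_succ d) hd

/-- evaluation of the homogenization at a non-zero of `v`. -/
private lemma homog_eval_vne (S u v : ℂ[X]) (d : ℕ) (hS : S.natDegree < d + 1) (z : ℂ)
    (hz : v.eval z ≠ 0) :
    (∑ i ∈ Finset.range (d + 1), Polynomial.C (S.coeff i) * u ^ i * v ^ (d - i)).eval z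
      = (v.eval z) ^ d * S.eval (u.eval z / v.eval z) := by
  rw [Polynomial.eval_finset_sum, Polynomial.eval_eq_sum_range' hS, Finset.mul_sum]
  refine Finset.sum_congr rfl fun i hi => ?_
  have hi' : i ≤ d := Nat.lt_succ_iff.mp (Finset.mem_range.mp hi)
  simp only [Polynomial.eval_mul, Polynomial.eval_pow, Polynomial.eval_C]
  rw [div_pow,
    show (v.eval z) ^ d = (v.eval z) ^ (d - i) * (v.eval z) ^ i by
      rw [← pow_add, Nat.sub_add_cancel hi']]
  field_simp


/-- If a nonconstant polynomial `h ∈ ℂ[z]` decomposes as `h = f ∘ g` with nonconstant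
rational functions `f, g ∈ ℂ(z)`, then there is a linear fractional `ρ(z) = (az+b)/(cz+d)`
(with inverse `ρ⁻¹(z) = (dz-b)/(-cz+a)`) such that `f ∘ ρ⁻¹` and `ρ ∘ g` are both
polynomials. -/
theorem poly_decomposition_moebius (h : ℂ[X]) (hh : 0 < h.natDegree)
    (f g : RatFunc ℂ) (hf : ∀ c : ℂ, f ≠ RatFunc.C c) (hg : ∀ c : ℂ, g ≠ RatFunc.C c)
    (hfg : algebraMap ℂ[X] (RatFunc ℂ) h = RatFunc.comp' f g) :
    ∃ a b c d : ℂ, a * d - b * c ≠ 0 ∧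
      (∃ P : ℂ[X], (RatFunc.C a * g + RatFunc.C b) / (RatFunc.C c * g + RatFunc.C d) =
        algebraMap ℂ[X] (RatFunc ℂ) P) ∧
      (∃ Q : ℂ[X], RatFunc.comp' f ((RatFunc.C d * RatFunc.X - RatFunc.C b) /
          (-RatFunc.C c * RatFunc.X + RatFunc.C a)) = algebraMap ℂ[X] (RatFunc ℂ) Q) := by
  classical
  set A := algebraMap ℂ[X] (RatFunc ℂ) with hAdef
  set aC := algebraMap ℂ (RatFunc ℂ) with haCdef
  set P := f.num with hPdef
  set Q := f.denom with hQdef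
  set u := g.num with hudef
  set v := g.denom with hvdef
  have hQm : Q.Monic := RatFunc.monic_denom f
  have hvm : v.Monic := RatFunc.monic_denom g
  have hQ0 : Q ≠ 0 := hQm.ne_zero
  have hv0 : v ≠ 0 := hvm.ne_zero
  have hPQ : IsCoprime P Q := RatFunc.isCoprime_num_denom f
  have huv : IsCoprime u v := RatFunc.isCoprime_num_denom g
  have hgne : g ≠ 0 := fun h0 => hg 0 (by simp [h0])
  have hu0 : u ≠ 0 := by
    rw [hudef]; exact RatFunc.num_ne_zero hgne
  have hfne : f ≠ 0 := fun h0 => hf 0 (by simp [h0])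
  have hP0 : P ≠ 0 := by
    rw [hPdef]; exact RatFunc.num_ne_zero hfne
  set p := P.natDegree with hpdef
  set q := Q.natDegree with hqdef
  -- nonconstancy
  have hconst : ∀ (x : RatFunc ℂ), x.num.natDegree = 0 → x.denom.natDegree = 0 →
      ∃ c : ℂ, x = RatFunc.C c := by
    intro x h1 h2
    have hd1 : x.denom = 1 := by
      have := Polynomial.eq_C_of_natDegree_eq_zero h2
      have hlc : x.denom.coeff 0 = 1 := by
        have := (RatFunc.monic_denom x).coeff_natDegree
        rwa [h2] at this
      rw [this, hlc, map_one]
    refine ⟨x.num.coeff 0, ?_⟩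
    rw [← RatFunc.num_div_denom x, hd1, Polynomial.eq_C_of_natDegree_eq_zero h1]
    simp [RatFunc.algebraMap_C]
  have hgc : ¬(u.natDegree = 0 ∧ v.natDegree = 0) := by
    rintro ⟨h1, h2⟩
    obtain ⟨c, hc⟩ := hconst g h1 h2
    exact hg c hc
  have hfc : ¬(p = 0 ∧ q = 0) := by
    rintro ⟨h1, h2⟩
    obtain ⟨c, hc⟩ := hconst f h1 h2
    exact hf c hc
  have hgeq : g = A u / A v := (RatFunc.num_div_denom g).symm
  have hAv0 : A v ≠ 0 := RatFunc.algebraMap_ne_zero hv0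
  -- homogenizations
  set HP := ∑ i ∈ Finset.range (p + 1), Polynomial.C (P.coeff i) * u ^ i * v ^ (p - i) with hHPdef
  set HQ := ∑ i ∈ Finset.range (q + 1), Polynomial.C (Q.coeff i) * u ^ i * v ^ (q - i) with hHQdef
  have heP : (A v) ^ p * P.eval₂ aC g = A HP := by
    rw [hgeq]; exact hom_eval P u v p (Nat.lt_succ_self _) hv0
  have heQ : (A v) ^ q * Q.eval₂ aC g = A HQ := by
    rw [hgeq]; exact hom_eval Q u v q (Nat.lt_succ_self _) hv0
  -- coprimality facts
  have hvu_root : ∀ z : ℂ, v.eval z = 0 → u.eval z ≠ 0 := fun z hz => not_both_root huv.symm z hz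
  have hHQ_vroot : ∀ z : ℂ, v.eval z = 0 → HQ.eval z ≠ 0 := by
    intro z hz
    rw [hHQdef, homog_eval_vzero Q u v q z hz, hQm.coeff_natDegree, one_mul]
    exact pow_ne_zero _ (hvu_root z hz)
  have hHP_vroot : ∀ z : ℂ, v.eval z = 0 → HP.eval z ≠ 0 := by
    intro z hz
    rw [hHPdef, homog_eval_vzero P u v p z hz]
    exact mul_ne_zero (Polynomial.leadingCoeff_ne_zero.mpr hP0) (pow_ne_zero _ (hvu_root z hz))
  have hcvQ : IsCoprime v HQ := coprime_of_no_common_root hHQ_vroot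
  have hcvP : IsCoprime v HP := coprime_of_no_common_root hHP_vroot
  have hcQP : IsCoprime HQ HP := by
    apply coprime_of_no_common_root
    intro z hz
    by_cases hvz : v.eval z = 0
    · exact absurd hz (hHQ_vroot z hvz)
    · intro hPz
      have hQw : Q.eval (u.eval z / v.eval z) = 0 := by
        rw [hHQdef, homog_eval_vne Q u v q (Nat.lt_succ_self _) z hvz] at hz
        exact (mul_eq_zero.mp hz).resolve_left (pow_ne_zero _ hvz)
      have hPw : P.eval (u.eval z / v.eval z) = 0 := by
        rw [hHPdef, homog_eval_vne P u v p (Nat.lt_succ_self _) z hvz] at hPz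
        exact (mul_eq_zero.mp hPz).resolve_left (pow_ne_zero _ hvz)
      exact not_both_root hPQ _ hPw hQw
  -- HQ ≠ 0
  have hHQ0 : HQ ≠ 0 := by
    intro h0
    have hvu : IsUnit v := isCoprime_zero_right.mp (h0 ▸ hcvQ)
    have hv1 : v = 1 := hvm.eq_one_of_isUnit hvu
    have hdu : u.natDegree ≠ 0 := fun hdu => hgc ⟨hdu, by rw [hv1]; simp⟩
    have hHQc : HQ = Q.comp u := by
      rw [hHQdef, hv1]
      rw [show Q.comp u = Q.eval₂ Polynomial.C u from rfl,
        Polynomial.eval₂_eq_sum_range' _ (Nat.lt_succ_self _)]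
      simp
      rfl
    have hlc : (Q.comp u).leadingCoeff ≠ 0 := by
      rw [Polynomial.leadingCoeff_comp hdu]
      exact mul_ne_zero (Polynomial.leadingCoeff_ne_zero.mpr hQ0)
        (pow_ne_zero _ (Polynomial.leadingCoeff_ne_zero.mpr hu0))
    rw [Polynomial.leadingCoeff_ne_zero] at hlc
    exact hlc (by rw [← hHQc, h0])
  have hQe0 : Q.eval₂ aC g ≠ 0 := by
    intro h0
    apply RatFunc.algebraMap_ne_zero hHQ0 (K := ℂ)
    rw [← heQ, h0, mul_zero]
  -- main equation
  have hmain0 : A h * Q.eval₂ aC g = P.eval₂ aC g := by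
    have : A h = P.eval₂ aC g / Q.eval₂ aC g := by
      rw [hfg]
      simp only [RatFunc.comp', RatFunc.eval, ← hPdef, ← hQdef, ← haCdef]
    rw [this, div_mul_cancel₀ _ hQe0]
  set N := max p q with hNdef
  have hkey : h * HQ * v ^ (N - q) = HP * v ^ (N - p) := by
    apply RatFunc.algebraMap_injective (K := ℂ)
    rw [map_mul, map_mul, map_mul, map_pow, map_pow]
    calc A h * A HQ * (A v) ^ (N - q)
        = (A h * Q.eval₂ aC g) * ((A v) ^ q * (A v) ^ (N - q)) := by rw [← heQ]; ring
      _ = P.eval₂ aC g * (A v) ^ N := by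
          rw [hmain0, ← pow_add, Nat.add_sub_cancel' (le_max_right p q)]
      _ = ((A v) ^ p * P.eval₂ aC g) * (A v) ^ (N - p) := by
          rw [show (A v) ^ N = (A v) ^ p * (A v) ^ (N - p) by
            rw [← pow_add, Nat.add_sub_cancel' (le_max_left p q)]]
          ring
      _ = A HP * (A v) ^ (N - p) := by rw [heP]
  have hQdvd : HQ ∣ HP * v ^ (N - p) := ⟨h * v ^ (N - q), by rw [← hkey]; ring⟩
  have hQunit : IsUnit HQ :=
    (hcQP.mul_right (hcvQ.symm.pow_right (n := N - p))).isUnit_of_dvd' dvd_rfl hQdvd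
  by_cases hq : q = 0
  · -- `f` and `g` are both polynomials; take ρ = id
    have hQ1 : Q = 1 := by
      have := Polynomial.eq_C_of_natDegree_eq_zero (hqdef ▸ hq)
      have hlc : Q.coeff 0 = 1 := by
        have h2 := hQm.coeff_natDegree
        rwa [← hqdef, hq] at h2
      rw [this, hlc, map_one]
    have hp1 : p ≠ 0 := fun hp0 => hfc ⟨hp0, hq⟩
    have hHQ1 : HQ = 1 := by
      rw [hHQdef, hq]
      simp [hQ1]
    have hNp : N = p := by rw [hNdef, hq]; simp
    have hHPv : h * v ^ p = HP := by
      have := hkey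
      rw [hHQ1, hNp, hq, Nat.sub_zero, Nat.sub_self, pow_zero, mul_one, mul_one] at this
      exact this
    have hvdvd : v ∣ HP := by
      rw [← hHPv]
      exact Dvd.dvd.mul_left (dvd_pow_self v hp1) h
    have hvu : IsUnit v := hcvP.isUnit_of_dvd' dvd_rfl hvdvd
    have hv1 : v = 1 := hvm.eq_one_of_isUnit hvu
    refine ⟨1, 0, 0, 1, by norm_num, ⟨u, ?_⟩, ⟨P, ?_⟩⟩
    · rw [map_one, map_zero]
      rw [hgeq, hv1, map_one, div_one]
      simp
    · have harg : (RatFunc.C (1 : ℂ) * RatFunc.X - RatFunc.C (0 : ℂ)) /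
          (-RatFunc.C (0 : ℂ) * RatFunc.X + RatFunc.C (1 : ℂ)) = RatFunc.X := by
        simp
      rw [harg]
      have hAC : (algebraMap ℂ[X] (RatFunc ℂ)).comp Polynomial.C = algebraMap ℂ (RatFunc ℂ) := by
        refine RingHom.ext fun x => ?_
        rw [RingHom.comp_apply, RatFunc.algebraMap_C, RatFunc.algebraMap_eq_C]
      have hPe : P.eval₂ aC RatFunc.X = A P := by
        have := Polynomial.hom_eval₂ P Polynomial.C A Polynomial.X
        rw [Polynomial.eval₂_C_X, hAdef, hAC, RatFunc.algebraMap_X] at this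
        rw [haCdef, ← this, hAdef]
      show P.eval₂ aC RatFunc.X / Q.eval₂ aC RatFunc.X = A P
      rw [hQ1, Polynomial.eval₂_one, div_one, hPe]
  · -- q ≥ 1 : f has a unique pole w, and 1/(g - w) is a polynomial
    obtain ⟨κ, hκu, hκ⟩ := Polynomial.isUnit_iff.mp hQunit
    have factor_const : ∀ w' : ℂ, Q.IsRoot w' →
        ∃ e : ℂ, e ≠ 0 ∧ u - Polynomial.C w' * v = Polynomial.C e := by
      intro w' hw'
      obtain ⟨Q₁, hQ₁⟩ := Polynomial.dvd_iff_isRoot.mpr hw'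
      have hQ₁0 : Q₁ ≠ 0 := by rintro rfl; rw [mul_zero] at hQ₁; exact hQ0 hQ₁
      have hdQ₁ : Q₁.natDegree < (q - 1) + 1 := by
        have hd := congrArg Polynomial.natDegree hQ₁
        rw [Polynomial.natDegree_mul (Polynomial.X_sub_C_ne_zero w') hQ₁0,
          Polynomial.natDegree_X_sub_C] at hd
        omega
      set HQ₁ := ∑ i ∈ Finset.range ((q - 1) + 1),
        Polynomial.C (Q₁.coeff i) * u ^ i * v ^ (q - 1 - i) with hHQ₁def
      have e1 : (A v) ^ (q - 1) * Q₁.eval₂ aC g = A HQ₁ := by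
        rw [hgeq]; exact hom_eval Q₁ u v (q - 1) hdQ₁ hv0
      have e2 : A v * (g - RatFunc.C w') = A (u - Polynomial.C w' * v) := by
        rw [hgeq, mul_sub, mul_div_cancel₀ _ hAv0, map_sub, map_mul, RatFunc.algebraMap_C]
        ring
      have e3 : A HQ = A ((u - Polynomial.C w' * v) * HQ₁) := by
        rw [← heQ, hQ₁, Polynomial.eval₂_mul, Polynomial.eval₂_sub, Polynomial.eval₂_X,
          Polynomial.eval₂_C, map_mul, ← e1, ← e2,
          show (A v) ^ q = A v * (A v) ^ (q - 1) by
            conv_lhs => rw [← Nat.succ_pred_eq_of_pos (Nat.pos_of_ne_zero hq)]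
            rw [pow_succ']
            rfl]
        have : aC w' = RatFunc.C w' := by rw [haCdef, RatFunc.algebraMap_eq_C]
        rw [this]; ring
      have hfac : HQ = (u - Polynomial.C w' * v) * HQ₁ :=
        RatFunc.algebraMap_injective (K := ℂ) e3
      have hunit : IsUnit (u - Polynomial.C w' * v) :=
        isUnit_of_mul_isUnit_left (hfac ▸ hQunit)
      obtain ⟨e, heu, hee⟩ := Polynomial.isUnit_iff.mp hunit
      exact ⟨e, heu.ne_zero, hee.symm⟩
    have hdq : Q.degree ≠ 0 := by
      rw [Polynomial.degree_eq_natDegree hQ0, ← hqdef]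
      exact_mod_cast fun hd => hq (by exact_mod_cast hd)
    obtain ⟨w, hw⟩ := IsAlgClosed.exists_root Q hdq
    obtain ⟨e, he0, he⟩ := factor_const w hw
    have hdv : v.natDegree ≠ 0 := by
      intro hdv0
      have hv1 : v = 1 := by
        have h2 := Polynomial.eq_C_of_natDegree_eq_zero hdv0
        have hlc : v.coeff 0 = 1 := by
          have := hvm.coeff_natDegree; rwa [hdv0] at this
        rw [h2, hlc, map_one]
      have hu' : u = Polynomial.C (w + e) := by
        have : u = Polynomial.C w * v + Polynomial.C e := by linear_combination he
        rw [this, hv1, map_add]; ring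
      exact hgc ⟨by rw [hu']; exact Polynomial.natDegree_C _, hdv0⟩
    have hpq : p ≤ q := by
      by_contra hlt
      push_neg at hlt
      have hNp : N = p := by rw [hNdef]; exact max_eq_left (le_of_lt hlt)
      have hkey' : h * HQ * v ^ (p - q) = HP := by
        have := hkey; rwa [hNp, Nat.sub_self, pow_zero, mul_one] at this
      have hvdvd : v ∣ HP := by
        rw [← hkey']
        exact Dvd.dvd.mul_left (dvd_pow_self v (by omega)) _
      have hvu : IsUnit v := hcvP.isUnit_of_dvd' dvd_rfl hvdvd
      exact hdv (by rw [hvm.eq_one_of_isUnit hvu]; exact Polynomial.natDegree_one)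
    have hroots_eq : ∀ w' : ℂ, Q.IsRoot w' → w' = w := by
      intro w' hw'
      by_contra hne
      obtain ⟨e', he'0, he'⟩ := factor_const w' hw'
      have hCv : Polynomial.C (w' - w) * v = Polynomial.C (e - e') := by
        rw [map_sub, map_sub]
        linear_combination he - he'
      have hveq : v = Polynomial.C ((w' - w)⁻¹ * (e - e')) := by
        apply mul_left_cancel₀ (show Polynomial.C (w' - w) ≠ 0 from
          Polynomial.C_ne_zero.mpr (sub_ne_zero.mpr hne))
        rw [hCv, ← map_mul, ← mul_assoc, mul_inv_cancel₀ (sub_ne_zero.mpr hne), one_mul]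
      exact hdv (by rw [hveq]; exact Polynomial.natDegree_C _)
    have hQpow : Q = (Polynomial.X - Polynomial.C w) ^ q := by
      have hsp : Q.Splits := IsAlgClosed.splits Q
      have hcard : Multiset.card Q.roots = q := by
        have := hsp.natDegree_eq_card_roots
        rw [← hqdef] at this
        exact this.symm
      have hrts : Q.roots = Multiset.replicate q w := by
        refine Multiset.eq_replicate.mpr ⟨hcard, fun b hb => ?_⟩
        exact hroots_eq b (Polynomial.isRoot_of_mem_roots hb)
      calc Q = (Q.roots.map fun a => Polynomial.X - Polynomial.C a).prod :=
            (Polynomial.prod_multiset_X_sub_C_of_monic_of_roots_card_eq hQm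
              hsp.natDegree_eq_card_roots.symm).symm
        _ = (Polynomial.X - Polynomial.C w) ^ q := by
            rw [hrts, Multiset.map_replicate, Multiset.prod_replicate]
    -- the Möbius map ρ(z) = 1/(z - w), with inverse ρ⁻¹(z) = (wz+1)/z
    refine ⟨0, 1, 1, -w, by norm_num, ⟨Polynomial.C e⁻¹ * v, ?_⟩, ?_⟩
    · -- 1/(g - w) = v/e is a polynomial
      rw [map_zero, map_one, zero_mul, zero_add, one_mul, map_neg, ← sub_eq_add_neg]
      have hsub : g - RatFunc.C w = RatFunc.C e / A v := by
        rw [eq_div_iff hAv0, sub_mul, hgeq, div_mul_cancel₀ _ hAv0, ← RatFunc.algebraMap_C (K := ℂ) e,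
          ← he, map_sub, map_mul, RatFunc.algebraMap_C]
      rw [hsub, one_div_div, map_mul, RatFunc.algebraMap_C]
      have hCe : RatFunc.C e ≠ 0 := by
        rw [← RatFunc.algebraMap_C (K := ℂ) e]
        exact RatFunc.algebraMap_ne_zero (Polynomial.C_ne_zero.mpr he0)
      field_simp
      rw [← map_mul, mul_one_div_cancel he0, map_one]
    · -- f ∘ ρ⁻¹ is a polynomial
      set t := (RatFunc.X : RatFunc ℂ) with htdef
      have ht0 : t ≠ 0 := RatFunc.X_ne_zero
      have harg : (RatFunc.C (-w) * t - RatFunc.C (1:ℂ)) /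
          (-RatFunc.C (1:ℂ) * t + RatFunc.C (0:ℂ)) = (RatFunc.C w * t + 1) / t := by
        rw [map_neg, map_one, map_zero]
        rw [div_eq_div_iff (by simpa using ht0) ht0]
        ring
      rw [harg]
      set ρ := (RatFunc.C w * t + 1) / t with hρdef
      have hρsub : ρ - RatFunc.C w = 1 / t := by
        rw [hρdef]
        field_simp
        ring
      have haw : aC w = RatFunc.C w := by rw [haCdef, RatFunc.algebraMap_eq_C]
      have hQe : Q.eval₂ aC ρ = (1 / t) ^ q := by
        rw [hQpow, Polynomial.eval₂_pow, Polynomial.eval₂_sub, Polynomial.eval₂_X,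
          Polynomial.eval₂_C, haw, hρsub]
      refine ⟨∑ i ∈ Finset.range (p + 1),
        Polynomial.C (P.coeff i) * (Polynomial.C w * Polynomial.X + 1) ^ i *
          Polynomial.X ^ (q - i), ?_⟩
      show P.eval₂ aC ρ / Q.eval₂ aC ρ = _
      rw [hQe, div_pow, one_pow, div_div_eq_mul_div, div_one]
      rw [Polynomial.eval₂_eq_sum_range' _ (Nat.lt_succ_self p), Finset.sum_mul, map_sum]
      refine Finset.sum_congr rfl fun i hi => ?_
      have hi' : i ≤ p := Nat.lt_succ_iff.mp (Finset.mem_range.mp hi)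
      rw [map_mul, map_mul, map_pow, map_pow, RatFunc.algebraMap_C, map_add, map_mul,
        RatFunc.algebraMap_C, RatFunc.algebraMap_X, map_one, ← htdef]
      have haPc : aC (P.coeff i) = RatFunc.C (P.coeff i) := by
        rw [haCdef, RatFunc.algebraMap_eq_C]
      rw [haPc, hρdef, div_pow,
        show t ^ q = t ^ i * t ^ (q - i) by
          rw [← pow_add, Nat.add_sub_cancel' (le_trans hi' hpq)]]
      field_simp
end
end

section
/- Let ω ∈ ℂ be a primitive third root of unity (so ω² + ω + 1 = 0). Define f(z) = (z³ − 6(ω + 1)z)/(3z² + 1) and g(z) = (2z³ + (ω + 1)z)/(z² − ω). Then f(g(z)) = (8z⁹ − 24z⁵ − 13z³ − 6z)/(12z⁸ + 13z⁶ + 12z⁴ − 1); in particular f ∘ g ∈ ℚ(z) has rational coefficients although f and g do not have real coefficients. -/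
noncomputable section

/-- `f(z) = (z³ - 6(ω+1)z)/(3z² + 1)`. -/
def f14 (ω : ℂ) : RatFunc ℂ :=
  (RatFunc.X ^ 3 - RatFunc.C (6 * (ω + 1)) * RatFunc.X) / (3 * RatFunc.X ^ 2 + 1)

/-- `g(z) = (2z³ + (ω+1)z)/(z² - ω)`. -/
def g14 (ω : ℂ) : RatFunc ℂ :=
  (2 * RatFunc.X ^ 3 + RatFunc.C (ω + 1) * RatFunc.X) / (RatFunc.X ^ 2 - RatFunc.C ω)

open Polynomial

theorem myEvalDiv {K : Type} [Field K] {L : Type} [Field L] (f : K →+* L) (a : L)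
    (p q : K[X]) (hq : q.eval₂ f a ≠ 0) :
    RatFunc.eval f a (algebraMap K[X] (RatFunc K) p / algebraMap K[X] (RatFunc K) q) =
      p.eval₂ f a / q.eval₂ f a := by
  have hq0 : q ≠ 0 := by rintro rfl; simp at hq
  set x := algebraMap K[X] (RatFunc K) p / algebraMap K[X] (RatFunc K) q with hx
  have e : algebraMap K[X] (RatFunc K) x.num / algebraMap K[X] (RatFunc K) x.denom
      = algebraMap K[X] (RatFunc K) p / algebraMap K[X] (RatFunc K) q := by
    rw [RatFunc.num_div_denom]
  rw [div_eq_div_iff (RatFunc.algebraMap_ne_zero (RatFunc.denom_ne_zero x))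
    (RatFunc.algebraMap_ne_zero hq0), ← map_mul, ← map_mul] at e
  have h1 : x.num * q = p * x.denom := RatFunc.algebraMap_injective K e
  have hde : x.denom.eval₂ f a ≠ 0 := fun h0 =>
    hq (Polynomial.eval₂_eq_zero_of_dvd_of_eval₂_eq_zero f a (RatFunc.denom_div_dvd p q) h0)
  rw [RatFunc.eval, div_eq_div_iff hde hq, ← Polynomial.eval₂_mul, ← Polynomial.eval₂_mul]
  exact congrArg (Polynomial.eval₂ f a) h1

theorem myNumDenom {K : Type} [Field K] {p q : K[X]} (hq : q.Monic) (hco : IsCoprime p q) :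
    (algebraMap K[X] (RatFunc K) p / algebraMap K[X] (RatFunc K) q).num = p ∧
    (algebraMap K[X] (RatFunc K) p / algebraMap K[X] (RatFunc K) q).denom = q := by
  have hq0 : q ≠ 0 := hq.ne_zero
  set x := algebraMap K[X] (RatFunc K) p / algebraMap K[X] (RatFunc K) q with hx
  have e : algebraMap K[X] (RatFunc K) x.num / algebraMap K[X] (RatFunc K) x.denom
      = algebraMap K[X] (RatFunc K) p / algebraMap K[X] (RatFunc K) q := by
    rw [RatFunc.num_div_denom]
  rw [div_eq_div_iff (RatFunc.algebraMap_ne_zero (RatFunc.denom_ne_zero x))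
    (RatFunc.algebraMap_ne_zero hq0), ← map_mul, ← map_mul] at e
  have h1 : x.num * q = p * x.denom := RatFunc.algebraMap_injective K e
  have hdq : x.denom ∣ q := RatFunc.denom_div_dvd p q
  have hqd : q ∣ x.denom := by
    have hh : q ∣ p * x.denom := ⟨x.num, by rw [← h1]; ring⟩
    exact (hco.symm).dvd_of_dvd_mul_left hh
  have hden : x.denom = q :=
    Polynomial.eq_of_monic_of_associated (x.monic_denom) hq (associated_of_dvd_dvd hdq hqd)
  refine ⟨?_, hden⟩
  have h2 := h1
  rw [hden] at h2
  exact mul_right_cancel₀ hq0 h2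

/-- **Example (ℓ = 3).** For a primitive third root of unity `ω`, with
`f(z) = (z³ - 6(ω+1)z)/(3z² + 1)` and `g(z) = (2z³ + (ω+1)z)/(z² - ω)` one has
`f(g(z)) = (8z⁹ - 24z⁵ - 13z³ - 6z)/(12z⁸ + 13z⁶ + 12z⁴ - 1) ∈ ℚ(z)`, although `f` and
`g` do not have real coefficients. -/
theorem explicit_example (ω : ℂ) (hω : ω ^ 2 + ω + 1 = 0) :
    RatFunc.comp' (f14 ω) (g14 ω) =
      (8 * RatFunc.X ^ 9 - 24 * RatFunc.X ^ 5 - 13 * RatFunc.X ^ 3 - 6 * RatFunc.X) /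
        (12 * RatFunc.X ^ 8 + 13 * RatFunc.X ^ 6 + 12 * RatFunc.X ^ 4 - 1) ∧
    ¬ (f14 ω).IsReal ∧ ¬ (g14 ω).IsReal := by
  have A := algebraMap ℂ[X] (RatFunc ℂ)
  -- basic facts about ω
  have hω0 : ω ≠ 0 := by rintro rfl; norm_num at hω
  have hω31 : 3 * ω + 1 ≠ 0 := by
    intro h
    have h' : ω = -1/3 := by linear_combination h / 3
    rw [h'] at hω; norm_num at hω
  have hω1819 : 18 * ω + 19 ≠ 0 := by
    intro h
    have h' : ω = -19/18 := by linear_combination h / 18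
    rw [h'] at hω; norm_num at hω
  have himω : ω.im ≠ 0 := by
    intro h0
    have h2 := congrArg Complex.re hω
    simp only [Complex.add_re, Complex.one_re, pow_two, Complex.mul_re, h0,
      Complex.zero_re, mul_zero, sub_zero] at h2
    nlinarith [sq_nonneg (2 * ω.re + 1)]
  have hC : (Polynomial.C ω) ^ 2 + Polynomial.C ω + 1 = (0 : ℂ[X]) := by
    have h := congrArg (Polynomial.C (R := ℂ)) hω
    simpa only [map_add, map_pow, map_one, map_zero] using h
  -- key polynomial identities
  have hTd : ((X:ℂ[X])^2 - C ω) * (3*(2*(X:ℂ[X])^3 + C (ω+1)*X)^2 + ((X:ℂ[X])^2 - C ω)^2)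
      = 12*(X:ℂ[X])^8 + 13*X^6 + 12*X^4 - 1 := by
    simp only [map_add, map_mul, map_one, map_ofNat]
    linear_combination (-9*(X:ℂ[X])^4 - 3*C ω*X^2 - C ω + 1) * hC
  have hTn : (2*(X:ℂ[X])^3 + C (ω+1)*X)^3
        - C (6*(ω+1)) * ((2*(X:ℂ[X])^3 + C (ω+1)*X) * ((X:ℂ[X])^2 - C ω)^2)
      = 8*(X:ℂ[X])^9 - 24*X^5 - 13*X^3 - 6*X := by
    simp only [map_add, map_mul, map_one, map_ofNat]
    linear_combination (24*(X:ℂ[X])^5 + (C ω+14)*X^3 - 6*((C ω)^2 + C ω - 1)*X) * hC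
  -- nonzeroness
  have hQ'0 : ((X:ℂ[X])^2 - C ω) ≠ 0 := (monic_X_pow_sub_C ω two_ne_zero).ne_zero
  have hTd0 : (12*(X:ℂ[X])^8 + 13*X^6 + 12*X^4 - 1) ≠ 0 := by
    intro h
    have h0 := congrArg (Polynomial.eval 0) h
    simp at h0
  have hQB0 : ((X:ℂ[X])^2 - C ω) * (3*(2*(X:ℂ[X])^3 + C (ω+1)*X)^2 + ((X:ℂ[X])^2 - C ω)^2) ≠ 0 := by
    rw [hTd]; exact hTd0
  have hB0 : (3*(2*(X:ℂ[X])^3 + C (ω+1)*X)^2 + ((X:ℂ[X])^2 - C ω)^2) ≠ 0 :=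
    right_ne_zero_of_mul hQB0
  -- f14 and g14 as quotients of polynomial images
  have hg : g14 ω = algebraMap ℂ[X] (RatFunc ℂ) (2*(X:ℂ[X])^3 + C (ω+1)*X)
      / algebraMap ℂ[X] (RatFunc ℂ) ((X:ℂ[X])^2 - C ω) := by
    simp [g14, map_add, map_sub, map_mul, map_pow, map_ofNat]
  have hf : f14 ω = algebraMap ℂ[X] (RatFunc ℂ) ((X:ℂ[X])^3 - C (6*(ω+1))*X)
      / algebraMap ℂ[X] (RatFunc ℂ) (3*(X:ℂ[X])^2 + 1) := by
    simp [f14, map_add, map_sub, map_mul, map_pow, map_ofNat]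
  set g := g14 ω with hgdef
  have hAQ' : algebraMap ℂ[X] (RatFunc ℂ) ((X:ℂ[X])^2 - C ω) ≠ 0 :=
    RatFunc.algebraMap_ne_zero hQ'0
  have hev2 : ((3:ℂ[X])*X^2 + 1).eval₂ (algebraMap ℂ (RatFunc ℂ)) g = 3*g^2 + 1 := by
    simp
  have hev1 : ((X:ℂ[X])^3 - C (6*(ω+1))*X).eval₂ (algebraMap ℂ (RatFunc ℂ)) g
      = g^3 - RatFunc.C (6*(ω+1)) * g := by
    simp
  have hgpow : 3*g^2 + 1 = algebraMap ℂ[X] (RatFunc ℂ)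
        (3*(2*(X:ℂ[X])^3 + C (ω+1)*X)^2 + ((X:ℂ[X])^2 - C ω)^2)
      / algebraMap ℂ[X] (RatFunc ℂ) (((X:ℂ[X])^2 - C ω)^2) := by
    rw [hg]
    simp only [map_add, map_mul, map_pow, map_ofNat, map_sub, map_one, RatFunc.algebraMap_C,
      RatFunc.algebraMap_X]
    have hv : ((RatFunc.X : RatFunc ℂ)^2 - RatFunc.C ω) ≠ 0 := by
      simpa only [map_pow, map_sub, RatFunc.algebraMap_C, RatFunc.algebraMap_X] using hAQ'
    field_simp
  have h3g0 : 3*g^2 + 1 ≠ 0 := by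
    rw [hgpow]
    exact div_ne_zero (RatFunc.algebraMap_ne_zero hB0)
      (RatFunc.algebraMap_ne_zero (pow_ne_zero 2 hQ'0))
  have hnum : g^3 - RatFunc.C (6*(ω+1)) * g = algebraMap ℂ[X] (RatFunc ℂ)
        ((2*(X:ℂ[X])^3 + C (ω+1)*X)^3
          - C (6*(ω+1)) * ((2*(X:ℂ[X])^3 + C (ω+1)*X)*((X:ℂ[X])^2 - C ω)^2))
      / algebraMap ℂ[X] (RatFunc ℂ) (((X:ℂ[X])^2 - C ω)^3) := by
    rw [hg]
    simp only [map_add, map_mul, map_pow, map_ofNat, map_sub, map_one, RatFunc.algebraMap_C,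
      RatFunc.algebraMap_X]
    have hv : ((RatFunc.X : RatFunc ℂ)^2 - RatFunc.C ω) ≠ 0 := by
      simpa only [map_pow, map_sub, RatFunc.algebraMap_C, RatFunc.algebraMap_X] using hAQ'
    field_simp
  refine ⟨?_, ?_, ?_⟩
  · rw [RatFunc.comp', hf, myEvalDiv _ _ _ _ (by rw [hev2]; exact h3g0), hev1, hev2,
      hnum, hgpow]
    have hrhs1 : (8 * RatFunc.X ^ 9 - 24 * RatFunc.X ^ 5 - 13 * RatFunc.X ^ 3 - 6 * RatFunc.X
        : RatFunc ℂ) = algebraMap ℂ[X] (RatFunc ℂ) (8*(X:ℂ[X])^9 - 24*X^5 - 13*X^3 - 6*X) := by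
      simp only [map_sub, map_add, map_mul, map_pow, map_ofNat, map_one, RatFunc.algebraMap_X]
    have hrhs2 : (12 * RatFunc.X ^ 8 + 13 * RatFunc.X ^ 6 + 12 * RatFunc.X ^ 4 - 1
        : RatFunc ℂ) = algebraMap ℂ[X] (RatFunc ℂ) (12*(X:ℂ[X])^8 + 13*X^6 + 12*X^4 - 1) := by
      simp only [map_sub, map_add, map_mul, map_pow, map_ofNat, map_one, RatFunc.algebraMap_X]
    rw [hrhs1, hrhs2]
    rw [div_eq_div_iff (div_ne_zero (RatFunc.algebraMap_ne_zero hB0)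
      (RatFunc.algebraMap_ne_zero (pow_ne_zero 2 hQ'0))) (RatFunc.algebraMap_ne_zero hTd0)]
    rw [div_mul_eq_mul_div, ← mul_div_assoc, div_eq_div_iff
      (RatFunc.algebraMap_ne_zero (pow_ne_zero 3 hQ'0)) (RatFunc.algebraMap_ne_zero (pow_ne_zero 2 hQ'0))]
    simp only [← map_mul]
    refine congrArg _ ?_
    linear_combination (((X:ℂ[X])^2 - C ω)^2 * (12*(X:ℂ[X])^8 + 13*X^6 + 12*X^4 - 1)) * hTn
      - (((X:ℂ[X])^2 - C ω)^2 * (8*(X:ℂ[X])^9 - 24*X^5 - 13*X^3 - 6*X)) * hTd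
  · rintro ⟨hre, -⟩
    have h13 : (Polynomial.C ((3:ℂ)⁻¹) * 3 : ℂ[X]) = 1 := by
      rw [← map_ofNat (Polynomial.C : ℂ →+* ℂ[X]) 3, ← map_mul]
      norm_num
    have hc : (18*ω+19)⁻¹ * (18*ω+19) = 1 := inv_mul_cancel₀ hω1819
    have hcC : Polynomial.C ((18*ω+19)⁻¹) * (18 * Polynomial.C ω + 19) = (1:ℂ[X]) := by
      have h := congrArg (Polynomial.C (R := ℂ)) hc
      simp only [map_mul, map_add, map_ofNat, map_one] at h
      linear_combination h
    have hco : IsCoprime (Polynomial.C ((3:ℂ)⁻¹) * X^3 - Polynomial.C (2*(ω+1)) * X)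
        ((X:ℂ[X])^2 + Polynomial.C ((3:ℂ)⁻¹)) := by
      refine ⟨Polynomial.C (27*(18*ω+19)⁻¹) * X,
        Polynomial.C 3 - Polynomial.C (9*(18*ω+19)⁻¹) * X^2, ?_⟩
      simp only [map_mul, map_add, map_ofNat, map_one]
      linear_combination (9*Polynomial.C ((18*ω+19)⁻¹)*(X:ℂ[X])^4
          - 3*Polynomial.C ((18*ω+19)⁻¹)*X^2 + 1) * h13 - (3*(X:ℂ[X])^2) * hcC
    have hmon : ((X:ℂ[X])^2 + Polynomial.C ((3:ℂ)⁻¹)).Monic :=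
      monic_X_pow_add_C _ two_ne_zero
    have hf1 : f14 ω = algebraMap ℂ[X] (RatFunc ℂ)
          (Polynomial.C ((3:ℂ)⁻¹) * X^3 - Polynomial.C (2*(ω+1)) * X)
        / algebraMap ℂ[X] (RatFunc ℂ) ((X:ℂ[X])^2 + Polynomial.C ((3:ℂ)⁻¹)) := by
      rw [hf, div_eq_div_iff (RatFunc.algebraMap_ne_zero (by
          intro hz
          have h0 := congrArg (Polynomial.eval 0) hz
          simp at h0))
        (RatFunc.algebraMap_ne_zero hmon.ne_zero), ← map_mul, ← map_mul]
      refine congrArg _ ?_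
      simp only [map_mul, map_add, map_ofNat, map_one]
      linear_combination (-((X:ℂ[X])^5 + 2*(Polynomial.C ω+1)*X)) * h13
    have hnum1 := (myNumDenom hmon hco).1
    have h5 := hre 1
    rw [hf1, hnum1] at h5
    simp only [Polynomial.coeff_sub, Polynomial.coeff_C_mul, Polynomial.coeff_X_pow,
      Polynomial.coeff_X_one] at h5
    norm_num at h5
    exact himω h5
  · rintro ⟨-, hden⟩
    have he : ω⁻¹ * ω = 1 := inv_mul_cancel₀ hω0
    have heC : Polynomial.C (ω⁻¹) * Polynomial.C ω = (1:ℂ[X]) := by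
      rw [← map_mul, he, map_one]
    have hd : (3*ω+1)⁻¹ * (3*ω+1) = 1 := inv_mul_cancel₀ hω31
    have hdC : Polynomial.C ((3*ω+1)⁻¹) * (3 * Polynomial.C ω + 1) = (1:ℂ[X]) := by
      have h := congrArg (Polynomial.C (R := ℂ)) hd
      simp only [map_mul, map_add, map_ofNat, map_one] at h
      linear_combination h
    have hco' : IsCoprime (2*(X:ℂ[X])^3 + Polynomial.C (ω+1) * X) ((X:ℂ[X])^2 - Polynomial.C ω) := by
      refine ⟨Polynomial.C ((3*ω+1)⁻¹ * ω⁻¹) * X,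
        -(Polynomial.C (ω⁻¹)) - Polynomial.C (2*((3*ω+1)⁻¹ * ω⁻¹)) * X^2, ?_⟩
      simp only [map_mul, map_add, map_ofNat, map_one]
      linear_combination ((X:ℂ[X])^2 * Polynomial.C (ω⁻¹)) * hdC + heC
    have hmon' : ((X:ℂ[X])^2 - Polynomial.C ω).Monic := monic_X_pow_sub_C ω two_ne_zero
    have hden1 := (myNumDenom hmon' hco').2
    have h6 := hden 0
    rw [hg, hden1] at h6
    simp only [Polynomial.coeff_sub, Polynomial.coeff_X_pow, Polynomial.coeff_C] at h6
    norm_num at h6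
    exact himω h6

end
end
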